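/- Let f₀(t) = 2(1−t) for t ∈ [0,1] and 0 otherwise, with distribution function F₀(t) = 2t − t² on [0,1]. Let x₀ ∈ (0,1), c > 0, and let g be a convex function on [0,∞) with g(x₀) = f₀(x₀) + c. Let G(t) = ∫₀ᵗ g. Then |G(x₀) − F₀(x₀)| ≥ c·min(x₀, 1−x₀). -/

import Mathlib

open Set MeasureTheory

theorem stmt_14 (x₀ c : ℝ) (hx₀ : x₀ ∈ Ioo (0 : ℝ) 1) (hc : 0 < c)
    (g : ℝ → ℝ) (hg_nonneg : ∀ t ∈ Ici (0 : ℝ), 0 ≤ g t)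
    (hg_conv : ConvexOn ℝ (Ici (0 : ℝ)) g)
    (hg_int : IntegrableOn g (Ici (0 : ℝ)))
    (hg_one : ∫ t in Ici (0 : ℝ), g t = 1)
    (hval : g x₀ = 2 * (1 - x₀) + c)
    (G F₀ : ℝ → ℝ)
    (hG : ∀ t, G t = ∫ s in (0 : ℝ)..t, g s)
    (hF₀ : ∀ t, F₀ t = 2 * t - t ^ 2) :
    c * min x₀ (1 - x₀) ≤ |G x₀ - F₀ x₀| := by
  obtain ⟨hx0, hx1⟩ := hx₀
  -- integral of the affine function
  have haff : ∀ a b : ℝ, (∫ t in a..b, (2 * (1 - t) + c)) =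
      (2 + c) * (b - a) - (b ^ 2 - a ^ 2) := by
    intro a b
    have h1 : (∫ t in a..b, (2 * (1 - t) + c)) = ∫ t in a..b, ((2 + c) + (-2) * t) := by
      apply intervalIntegral.integral_congr; intro t _; ring
    rw [h1, intervalIntegral.integral_add intervalIntegrable_const
      (intervalIntegral.intervalIntegrable_id.const_mul (-2)),
      intervalIntegral.integral_const, intervalIntegral.integral_const_mul,
      integral_id]
    simp only [smul_eq_mul]
    ring
  have haffInt : ∀ a b : ℝ, IntervalIntegrable (fun t : ℝ => 2 * (1 - t) + c) volume a b :=
    fun a b => (by continuity : Continuous fun t : ℝ => 2 * (1 - t) + c).intervalIntegrable a b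
  have hgInt : ∀ a b : ℝ, 0 ≤ a → 0 ≤ b → IntervalIntegrable g volume a b := by
    intro a b ha hb
    apply (hg_int.mono_set _).intervalIntegrable
    intro t ht
    rcases mem_uIcc.1 ht with h | h
    · exact le_trans ha h.1
    · exact le_trans hb h.1
  by_cases hA : ∀ t ∈ Icc 0 x₀, 2 * (1 - t) + c ≤ g t
  · -- left case
    have hmono := intervalIntegral.integral_mono_on hx0.le (haffInt 0 x₀)
      (hgInt 0 x₀ le_rfl hx0.le) hA
    rw [haff] at hmono
    have hGe : c * x₀ ≤ G x₀ - F₀ x₀ := by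
      rw [hG, hF₀]; nlinarith [hmono]
    calc c * min x₀ (1 - x₀) ≤ c * x₀ := by
          apply mul_le_mul_of_nonneg_left (min_le_left _ _) hc.le
      _ ≤ G x₀ - F₀ x₀ := hGe
      _ ≤ |G x₀ - F₀ x₀| := le_abs_self _
  · -- there is a ∈ [0,x₀] with g a < line a; show right inequality holds on [x₀,1]
    push_neg at hA
    obtain ⟨a, ha, hga⟩ := hA
    have hB : ∀ t ∈ Icc x₀ 1, 2 * (1 - t) + c ≤ g t := by
      by_contra hB
      push_neg at hB
      obtain ⟨b, hb, hgb⟩ := hB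
      have hax : a < x₀ := lt_of_le_of_ne ha.2 (by rintro rfl; rw [hval] at hga; linarith)
      have hxb : x₀ < b := lt_of_le_of_ne hb.1 (by rintro rfl; rw [hval] at hgb; linarith)
      have hab : a < b := hax.trans hxb
      set μ := (b - x₀) / (b - a) with hμdef
      set ν := (x₀ - a) / (b - a) with hνdef
      have hba : (0:ℝ) < b - a := by linarith
      have hμ : 0 < μ := div_pos (by linarith) hba
      have hν : 0 < ν := div_pos (by linarith) hba
      have hsum : μ + ν = 1 := by rw [hμdef, hνdef]; field_simp; ring
      have hcomb : μ * a + ν * b = x₀ := by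
        rw [hμdef, hνdef]; field_simp; ring
      have hcv := hg_conv.2 (ha.1 : a ∈ Ici (0:ℝ))
        (le_trans (le_trans ha.1 ha.2) hxb.le : b ∈ Ici (0:ℝ)) hμ.le hν.le hsum
      simp only [smul_eq_mul] at hcv
      rw [hcomb, hval] at hcv
      have hlin : μ * (2 * (1 - a) + c) + ν * (2 * (1 - b) + c) = 2 * (1 - x₀) + c := by
        linear_combination (2 + c) * hsum - 2 * hcomb
      nlinarith [mul_lt_mul_of_pos_left hga hμ, mul_lt_mul_of_pos_left hgb hν]
    -- right case
    have hmono := intervalIntegral.integral_mono_on hx1.le (haffInt x₀ 1)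
      (hgInt x₀ 1 hx0.le zero_le_one) hB
    rw [haff] at hmono
    -- split the integral over Ici 0
    have hsplit : (∫ t in Ioc 0 x₀, g t) + ∫ t in Ioi x₀, g t = 1 := by
      rw [← hg_one, integral_Ici_eq_integral_Ioi, ← setIntegral_union
        Ioc_disjoint_Ioi_same measurableSet_Ioi
        (hg_int.mono_set (fun t ht => le_of_lt ht.1))
        (hg_int.mono_set (fun t ht => le_trans hx0.le (le_of_lt ht))),
        Ioc_union_Ioi_eq_Ioi hx0.le]
    have htail : (∫ t in Ioc x₀ 1, g t) ≤ ∫ t in Ioi x₀, g t := by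
      apply setIntegral_mono_set (hg_int.mono_set (fun t ht => le_trans hx0.le (le_of_lt ht)))
      · exact (ae_restrict_iff' measurableSet_Ioi).2
          (ae_of_all _ fun t ht => hg_nonneg t (le_trans hx0.le ht.le))
      · exact ae_of_all _ fun t ht => ht.1
    have hIoc : (∫ t in Ioc x₀ 1, g t) = ∫ t in x₀..1, g t :=
      (intervalIntegral.integral_of_le hx1.le).symm
    have hG0 : G x₀ = ∫ t in Ioc 0 x₀, g t := by
      rw [hG, intervalIntegral.integral_of_le hx0.le]
    have hGe : c * (1 - x₀) ≤ F₀ x₀ - G x₀ := by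
      rw [hF₀, hG0]
      nlinarith [hsplit, htail, hIoc ▸ hmono]
    calc c * min x₀ (1 - x₀) ≤ c * (1 - x₀) := by
          apply mul_le_mul_of_nonneg_left (min_le_right _ _) hc.le
      _ ≤ F₀ x₀ - G x₀ := hGe
      _ ≤ |F₀ x₀ - G x₀| := le_abs_self _
      _ = |G x₀ - F₀ x₀| := abs_sub_comm _ _
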